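/- If n ≥ 4 and n ≡ 0 (mod 4), then the dominion of the prism graph satisfies ζ(G_n) = 4. -/

import Mathlib

/-- The prism graph `C_n □ P_2` on vertex set `ZMod n × Fin 2`:
`(i,r)` is adjacent to `(i±1,r)` and to `(i,1-r)`. -/
def prismGraph (n : ℕ) : SimpleGraph (ZMod n × Fin 2) where
  Adj u v := u ≠ v ∧
    ((u.1 = v.1 ∧ u.2 ≠ v.2) ∨
     (u.2 = v.2 ∧ (u.1 = v.1 + 1 ∨ v.1 = u.1 + 1)))
  symm := by
    constructor
    rintro ⟨i, r⟩ ⟨j, s⟩ ⟨hne, h⟩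
    refine ⟨Ne.symm hne, ?_⟩
    rcases h with ⟨h1, h2⟩ | ⟨h1, h2⟩
    · exact Or.inl ⟨h1.symm, h2.symm⟩
    · exact Or.inr ⟨h1.symm, h2.symm⟩
  loopless := by
    constructor
    rintro ⟨i, r⟩ ⟨hne, -⟩
    exact hne rfl

/-- `S` is a dominating set of the prism graph: every vertex is in `S`
or adjacent to a vertex of `S`. -/
def IsDominatingSet (n : ℕ) (S : Set (ZMod n × Fin 2)) : Prop :=
  ∀ v, v ∈ S ∨ ∃ u ∈ S, (prismGraph n).Adj u v

/-- The domination number `γ(G_n)`: minimum cardinality of a dominating set. -/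
noncomputable def domNum (n : ℕ) : ℕ :=
  sInf {k | ∃ S : Finset (ZMod n × Fin 2), S.card = k ∧ IsDominatingSet n ↑S}

/-- The dominion `ζ(G_n)`: the number of dominating sets of cardinality `γ(G_n)`. -/
noncomputable def dominion (n : ℕ) : ℕ :=
  {S : Finset (ZMod n × Fin 2) | S.card = domNum n ∧ IsDominatingSet n ↑S}.ncard

/-- The set of vertices encoded by a word `w : ZMod n → Bool × Bool`;
the first bit of `w i` records membership of the top vertex `(i,0)`,
the second bit that of the bottom vertex `(i,1)`. -/
def wordSet (n : ℕ) (w : ZMod n → Bool × Bool) : Set (ZMod n × Fin 2) :=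
  {v | (if v.2 = 0 then (w v.1).1 else (w v.1).2) = true}

/-- A minimum dominating word: it encodes a dominating set of cardinality `γ(G_n)`. -/
def IsMinDomWord (n : ℕ) (w : ZMod n → Bool × Bool) : Prop :=
  IsDominatingSet n (wordSet n w) ∧ (wordSet n w).ncard = domNum n

def letC : Bool × Bool := (false, false)
def letA : Bool × Bool := (true, false)
def letB : Bool × Bool := (false, true)
def letD : Bool × Bool := (true, true)


namespace PrismAux

abbrev BB := Bool × Bool

def step (p q : BB) : BB := (!p.1 && !q.1 && !q.2, !p.2 && !q.2 && !q.1)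

def T (s : BB × BB) : BB × BB := (s.2, step s.1 s.2)

def OkB (s : BB × BB) : Bool :=
  (!(s.1.1 && s.2.1) && !(s.1.1 && s.2.2) && !(s.2.1 && s.2.2)) &&
  (!(s.1.2 && s.2.2) && !(s.1.2 && s.2.1) && !(s.2.2 && s.2.1))

def pat : ZMod 4 → BB := fun j => if j = 0 then letA else if j = 2 then letB else letC

-- classification of forever-Ok seeds
lemma fact1 : ∀ s : BB × BB, OkB s = true → OkB (T s) = true → OkB (T (T s)) = true →
    ∃ k : ZMod 4, s = (pat k, pat (k + 1)) := by decide

-- pattern satisfies the recurrence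
lemma fact2 : ∀ x : ZMod 4, pat (x + 2) = step (pat x) (pat (x + 1)) := by decide

-- injectivity of k ↦ initial state
lemma fact3 : ∀ k l : ZMod 4, (pat k, pat (k+1)) = (pat l, pat (l+1)) → k = l := by decide

-- exactly-one boolean extraction
set_option synthInstance.maxSize 1000 in
set_option maxHeartbeats 1000000 in
lemma factStep : ∀ p q r : BB,
    ((q.1 = true ∨ r.1 = true ∨ p.1 = true ∨ q.2 = true) ∧
      ¬(q.1 = true ∧ r.1 = true) ∧ ¬(q.1 = true ∧ p.1 = true) ∧ ¬(q.1 = true ∧ q.2 = true) ∧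
      ¬(r.1 = true ∧ p.1 = true) ∧ ¬(r.1 = true ∧ q.2 = true) ∧ ¬(p.1 = true ∧ q.2 = true)) →
    ((q.2 = true ∨ r.2 = true ∨ p.2 = true ∨ q.1 = true) ∧
      ¬(q.2 = true ∧ r.2 = true) ∧ ¬(q.2 = true ∧ p.2 = true) ∧ ¬(q.2 = true ∧ q.1 = true) ∧
      ¬(r.2 = true ∧ p.2 = true) ∧ ¬(r.2 = true ∧ q.1 = true) ∧ ¬(p.2 = true ∧ q.1 = true)) →
    r = step p q ∧ OkB (p, q) = true := by decide

-- at most one bit per letter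
lemma fact4 : ∀ x : ZMod 4, ¬((pat x).1 = true ∧ (pat x).2 = true) := by decide

-- parity of column occupancy flips
lemma fact5 : ∀ x : ZMod 4, ((pat (x+1)).1 || (pat (x+1)).2) = !((pat x).1 || (pat x).2) := by decide

-- domination witnesses
lemma fact6 : ∀ x : ZMod 4, (pat x).1 = true ∨ (pat x).2 = true ∨ (pat (x+1)).1 = true ∨ (pat (x+3)).1 = true := by decide
lemma fact7 : ∀ x : ZMod 4, (pat x).2 = true ∨ (pat x).1 = true ∨ (pat (x+1)).2 = true ∨ (pat (x+3)).2 = true := by decide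

lemma fact8 : ∀ k : ZMod 4, k = 0 ∨ k = 1 ∨ k = 2 ∨ k = 3 := by decide

end PrismAux

open PrismAux

section
variable {n : ℕ}

variable {n : ℕ}

def cm (i : ZMod n) : ZMod 4 := (i.val : ZMod 4)

lemma cm_natCast [NeZero n] (hd : 4 ∣ n) (m : ℕ) : cm (m : ZMod n) = (m : ZMod 4) := by
  unfold cm
  rw [ZMod.val_natCast]
  conv_rhs => rw [← Nat.mod_add_div m n]
  push_cast
  rw [(ZMod.natCast_eq_zero_iff n 4).2 hd]
  ring

lemma cm_add_one [NeZero n] (hd : 4 ∣ n) (i : ZMod n) : cm (i + 1) = cm i + 1 := by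
  have h1 : ((i.val : ℕ) : ZMod n) = i := ZMod.natCast_rightInverse i
  have : i + 1 = ((i.val + 1 : ℕ) : ZMod n) := by push_cast [h1]; ring
  rw [this, cm_natCast hd]
  push_cast
  rfl
lemma cm_zero [NeZero n] : cm (0 : ZMod n) = 0 := by simp [cm]
lemma cm_one [NeZero n] (hd : 4 ∣ n) : cm (1 : ZMod n) = 1 := by
  have := cm_add_one hd (0 : ZMod n); simpa [cm_zero] using this

/-- the word of shift `k` -/
def wd (n : ℕ) (k : ZMod 4) : ZMod n → BB := fun i => pat (cm i + k)

lemma wd_natCast [NeZero n] (hd : 4 ∣ n) (k : ZMod 4) (m : ℕ) :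
    wd n k (m : ZMod n) = pat ((m : ZMod 4) + k) := by rw [wd, cm_natCast hd]


end

section
open PrismAux
variable {n : ℕ}

abbrev V (n : ℕ) := ZMod n × Fin 2

def flipr : Fin 2 → Fin 2 := fun r => if r = 0 then 1 else 0

def nbhd (v : V n) : Finset (V n) :=
  {v, (v.1 + 1, v.2), (v.1 - 1, v.2), (v.1, flipr v.2)}

lemma zmOne [NeZero n] (hn : 4 ≤ n) : (1 : ZMod n) ≠ 0 := by
  haveI : Fact (1 < n) := ⟨by omega⟩
  exact one_ne_zero

lemma zmTwo [NeZero n] (hn : 4 ≤ n) : (2 : ZMod n) ≠ 0 := by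
  intro h
  have h2 : ((2 : ℕ) : ZMod n) = 2 := by push_cast; ring
  have := congrArg ZMod.val (h2.trans h)
  rw [ZMod.val_natCast, ZMod.val_zero, Nat.mod_eq_of_lt (by omega)] at this
  omega

lemma addOne_ne [NeZero n] (hn : 4 ≤ n) (i : ZMod n) : i + 1 ≠ i := by
  intro h; exact zmOne hn (by rwa [add_eq_left] at h)

lemma subOne_ne [NeZero n] (hn : 4 ≤ n) (i : ZMod n) : i - 1 ≠ i := by
  intro h; rw [sub_eq_self] at h; exact zmOne hn h

lemma addOne_ne_subOne [NeZero n] (hn : 4 ≤ n) (i : ZMod n) : i + 1 ≠ i - 1 := by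
  intro h
  rw [eq_sub_iff_add_eq] at h
  have : (2 : ZMod n) = 0 := by linear_combination h
  exact zmTwo hn this

lemma flipr_ne (r : Fin 2) : flipr r ≠ r := by fin_cases r <;> decide

lemma flipr_of_ne {r s : Fin 2} (h : r ≠ s) : r = flipr s := by
  fin_cases r <;> fin_cases s <;> first | rfl | simp_all | (exfalso; exact h rfl)

lemma mem_nbhd [NeZero n] (hn : 4 ≤ n) {u v : V n} :
    u ∈ nbhd v ↔ u = v ∨ (prismGraph n).Adj u v := by
  constructor
  · intro h
    simp only [nbhd, Finset.mem_insert, Finset.mem_singleton] at h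
    rcases h with h | h | h | h
    · exact Or.inl h
    · refine Or.inr ⟨?_, Or.inr ⟨by rw [h], Or.inl (by rw [h])⟩⟩
      rw [h, Ne, Prod.ext_iff]
      rintro ⟨h1, -⟩
      exact addOne_ne hn v.1 h1
    · refine Or.inr ⟨?_, Or.inr ⟨by rw [h], Or.inr (by rw [h]; ring)⟩⟩
      rw [h, Ne, Prod.ext_iff]
      rintro ⟨h1, -⟩
      exact subOne_ne hn v.1 h1
    · refine Or.inr ⟨?_, Or.inl ⟨by rw [h], by rw [h]; exact flipr_ne v.2⟩⟩
      rw [h, Ne, Prod.ext_iff]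
      rintro ⟨-, h2⟩
      exact flipr_ne v.2 h2
  · intro h
    simp only [nbhd, Finset.mem_insert, Finset.mem_singleton]
    rcases h with h | ⟨hne, ⟨h1, h2⟩ | ⟨h1, h2⟩⟩
    · exact Or.inl h
    · exact Or.inr (Or.inr (Or.inr (Prod.ext h1 (flipr_of_ne h2))))
    · rcases h2 with h2 | h2
      · exact Or.inr (Or.inl (Prod.ext h2 h1))
      · exact Or.inr (Or.inr (Or.inl (Prod.ext (by rw [h2]; ring) h1)))

lemma nbhd_symm [NeZero n] (hn : 4 ≤ n) {u v : V n} : u ∈ nbhd v ↔ v ∈ nbhd u := by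
  rw [mem_nbhd hn, mem_nbhd hn, (prismGraph n).adj_comm]
  constructor <;> (rintro (h | h); exacts [Or.inl h.symm, Or.inr h])

lemma nbhd_card [NeZero n] (hn : 4 ≤ n) (v : V n) : (nbhd v).card = 4 := by
  rw [nbhd]
  rw [Finset.card_insert_of_notMem, Finset.card_insert_of_notMem,
      Finset.card_insert_of_notMem, Finset.card_singleton]
  · simp only [Finset.mem_singleton, Ne, Prod.ext_iff, not_and]
    intro _
    exact fun h => flipr_ne v.2 h.symm
  · simp only [Finset.mem_insert, Finset.mem_singleton, Prod.ext_iff, not_or, not_and]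
    constructor
    · intro h; exact absurd h (addOne_ne_subOne hn v.1)
    · intro _ h; exact flipr_ne v.2 h.symm
  · simp only [Finset.mem_insert, Finset.mem_singleton, Prod.ext_iff, not_or, not_and]
    refine ⟨fun h => absurd h.symm (addOne_ne hn v.1), fun h => absurd h.symm (subOne_ne hn v.1), ?_⟩
    intro _ h; exact flipr_ne v.2 h.symm

end

section
open PrismAux
variable {n : ℕ}

lemma dom_iff [NeZero n] (hn : 4 ≤ n) (S : Finset (V n)) :
    IsDominatingSet n ↑S ↔ ∀ v : V n, ∃ u ∈ S, u ∈ nbhd v := by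
  constructor
  · intro h v
    rcases h v with hv | ⟨u, hu, hadj⟩
    · exact ⟨v, hv, by simp [nbhd]⟩
    · exact ⟨u, hu, (mem_nbhd hn).2 (Or.inr hadj)⟩
  · intro h v
    rcases h v with ⟨u, hu, hmem⟩
    rcases (mem_nbhd hn).1 hmem with rfl | hadj
    · exact Or.inl hu
    · exact Or.inr ⟨u, hu, hadj⟩

lemma card_V [NeZero n] : Fintype.card (V n) = 2 * n := by
  rw [Fintype.card_prod, ZMod.card, Fintype.card_fin]; ring

lemma counting [NeZero n] (hn : 4 ≤ n) {S : Finset (V n)} (hdom : IsDominatingSet n ↑S) :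
    2 * n ≤ 4 * S.card ∧
      (S.card = n / 2 → 4 ∣ n → ∀ v : V n, (S.filter (· ∈ nbhd v)).card = 1) := by
  have hdom' := (dom_iff hn S).1 hdom
  have key : ∑ v : V n, (S.filter (· ∈ nbhd v)).card = 4 * S.card := by
    have h1 : ∀ v : V n, (S.filter (· ∈ nbhd v)).card = ∑ u ∈ S, if u ∈ nbhd v then 1 else 0 :=
      fun v => Finset.card_filter _ _
    rw [Finset.sum_congr rfl (fun v _ => h1 v), Finset.sum_comm]
    have h2 : ∀ u ∈ S, (∑ v : V n, if u ∈ nbhd v then 1 else 0) = 4 := by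
      intro u _
      have : ∀ v : V n, (if u ∈ nbhd v then 1 else 0) = (if v ∈ nbhd u then 1 else 0) := by
        intro v; simp only [nbhd_symm hn (u := u) (v := v)]
      rw [Finset.sum_congr rfl (fun v _ => this v), Finset.sum_ite_mem,
          Finset.univ_inter, Finset.sum_const, nbhd_card hn, smul_eq_mul, mul_one]
    rw [Finset.sum_congr rfl h2, Finset.sum_const, smul_eq_mul, mul_comm]
  have hge : ∀ v : V n, 1 ≤ (S.filter (· ∈ nbhd v)).card := by
    intro v
    rcases hdom' v with ⟨u, hu, hmem⟩
    exact Finset.card_pos.2 ⟨u, Finset.mem_filter.2 ⟨hu, hmem⟩⟩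
  have hsum_ge : 2 * n ≤ ∑ v : V n, (S.filter (· ∈ nbhd v)).card := by
    calc 2 * n = ∑ _v : V n, 1 := by rw [Finset.sum_const, smul_eq_mul, mul_one, Finset.card_univ, card_V]
    _ ≤ _ := Finset.sum_le_sum (fun v _ => hge v)
  refine ⟨by omega, ?_⟩
  intro hc hd v
  by_contra hne
  have h2 : 2 ≤ (S.filter (· ∈ nbhd v)).card := by
    have := hge v; omega
  have : ∑ v : V n, (S.filter (· ∈ nbhd v)).card > ∑ _v : V n, 1 := by
    apply Finset.sum_lt_sum (fun i _ => hge i) ⟨v, Finset.mem_univ v, by omega⟩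
  rw [Finset.sum_const, smul_eq_mul, mul_one, Finset.card_univ, card_V, key, hc] at this
  omega

end

section
open PrismAux

lemma quad {α : Type*} [DecidableEq α] {S : Finset α} {a b c d : α}
    (hab : a ≠ b) (hac : a ≠ c) (had : a ≠ d) (hbc : b ≠ c) (hbd : b ≠ d) (hcd : c ≠ d)
    (h : (S.filter (· ∈ ({a, b, c, d} : Finset α))).card = 1) :
    (a ∈ S ∨ b ∈ S ∨ c ∈ S ∨ d ∈ S) ∧
      ¬(a ∈ S ∧ b ∈ S) ∧ ¬(a ∈ S ∧ c ∈ S) ∧ ¬(a ∈ S ∧ d ∈ S) ∧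
      ¬(b ∈ S ∧ c ∈ S) ∧ ¬(b ∈ S ∧ d ∈ S) ∧ ¬(c ∈ S ∧ d ∈ S) := by
  rw [Finset.filter_mem_eq_inter, Finset.inter_comm, ← Finset.filter_mem_eq_inter,
      Finset.card_filter] at h
  rw [show ({a, b, c, d} : Finset α) = insert a (insert b (insert c {d})) from rfl] at h
  rw [Finset.sum_insert (by simp [hab, hac, had]),
      Finset.sum_insert (by simp [hbc, hbd]),
      Finset.sum_insert (by simp [hcd]), Finset.sum_singleton] at h
  by_cases ha : a ∈ S <;> by_cases hb : b ∈ S <;> by_cases hc' : c ∈ S <;> by_cases hd' : d ∈ S <;>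
    simp_all

end

section
open PrismAux
variable {n : ℕ}

def genSet (n : ℕ) [NeZero n] (w : ZMod n → BB) : Finset (V n) :=
  Finset.univ.filter (fun v => (if v.2 = 0 then (w v.1).1 else (w v.1).2) = true)

lemma coe_genSet [NeZero n] (w : ZMod n → BB) : ↑(genSet n w) = wordSet n w := by
  ext v; simp [genSet, wordSet]

def SK (n : ℕ) [NeZero n] (k : ZMod 4) : Finset (V n) := genSet n (wd n k)

lemma mem_genSet0 [NeZero n] (w : ZMod n → BB) (i : ZMod n) :
    ((i, (0 : Fin 2)) ∈ genSet n w) ↔ (w i).1 = true := by simp [genSet]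

lemma mem_genSet1 [NeZero n] (w : ZMod n → BB) (i : ZMod n) :
    ((i, (1 : Fin 2)) ∈ genSet n w) ↔ (w i).2 = true := by simp [genSet]

lemma classify [NeZero n] (hn : 4 ≤ n) (hd : 4 ∣ n) {S : Finset (V n)}
    (hcard : S.card = n / 2) (hdom : IsDominatingSet n ↑S) :
    ∃ k : ZMod 4, S = SK n k := by
  have hone := (counting hn hdom).2 hcard hd
  set w : ZMod n → BB :=
    fun i => (decide ((i, (0 : Fin 2)) ∈ S), decide ((i, (1 : Fin 2)) ∈ S)) with hw
  have tb0 : ∀ i : ZMod n, ((i, (0 : Fin 2)) ∈ S) ↔ (w i).1 = true := by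
    intro i; simp [hw]
  have tb1 : ∀ i : ZMod n, ((i, (1 : Fin 2)) ∈ S) ↔ (w i).2 = true := by
    intro i; simp [hw]
  -- exactly-one conditions at each column
  have main : ∀ j : ZMod n, w (j + 1) = step (w (j - 1)) (w j) ∧
      OkB (w (j - 1), w j) = true := by
    intro j
    have hnb0 : nbhd ((j, (0 : Fin 2)) : V n) =
        {(j, 0), (j + 1, 0), (j - 1, 0), (j, 1)} := by
      simp [nbhd, flipr]
    have hnb1 : nbhd ((j, (1 : Fin 2)) : V n) =
        {(j, 1), (j + 1, 1), (j - 1, 1), (j, 0)} := by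
      simp [nbhd, flipr]
    have ne01 : (0 : Fin 2) ≠ 1 := by decide
    have ne10 : (1 : Fin 2) ≠ 0 := by decide
    have d1 : ∀ r : Fin 2, ((j, r) : V n) ≠ (j + 1, r) :=
      fun r h => addOne_ne hn j (congrArg Prod.fst h).symm
    have d2 : ∀ r : Fin 2, ((j, r) : V n) ≠ (j - 1, r) :=
      fun r h => subOne_ne hn j (congrArg Prod.fst h).symm
    have d3 : ∀ r s : Fin 2, r ≠ s → ((j, r) : V n) ≠ (j, s) :=
      fun r s hrs h => hrs (congrArg Prod.snd h)
    have d4 : ∀ r : Fin 2, ((j + 1, r) : V n) ≠ (j - 1, r) :=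
      fun r h => addOne_ne_subOne hn j (congrArg Prod.fst h)
    have d5 : ∀ r s : Fin 2, ((j + 1, r) : V n) ≠ (j, s) :=
      fun r s h => addOne_ne hn j (congrArg Prod.fst h)
    have d6 : ∀ r s : Fin 2, ((j - 1, r) : V n) ≠ (j, s) :=
      fun r s h => subOne_ne hn j (congrArg Prod.fst h)
    have P0 := quad (d1 0) (d2 0) (d3 0 1 ne01) (d4 0) (d5 0 1) (d6 0 1)
      (by rw [← hnb0]; exact hone (j, 0))
    have P1 := quad (d1 1) (d2 1) (d3 1 0 ne10) (d4 1) (d5 1 0) (d6 1 0)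
      (by rw [← hnb1]; exact hone (j, 1))
    rw [tb0 j, tb0 (j + 1), tb0 (j - 1), tb1 j] at P0
    rw [tb1 j, tb1 (j + 1), tb1 (j - 1), tb0 j] at P1
    exact factStep (w (j - 1)) (w j) (w (j + 1)) P0 P1
  have hstep : ∀ i : ZMod n, w (i + 2) = step (w i) (w (i + 1)) := by
    intro i
    have h := (main (i + 1)).1
    rwa [show i + 1 + 1 = i + 2 by ring, show i + 1 - 1 = i by ring] at h
  have hok : ∀ i : ZMod n, OkB (w i, w (i + 1)) = true := by
    intro i
    have h := (main (i + 1)).2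
    rwa [show i + 1 - 1 = i by ring] at h
  set sq : ℕ → BB × BB := fun m => (w ((m : ℕ) : ZMod n), w (((m + 1 : ℕ)) : ZMod n)) with hsq
  have hcast : ∀ m : ℕ, (((m + 1 : ℕ)) : ZMod n) = ((m : ℕ) : ZMod n) + 1 := by
    intro m; push_cast; ring
  have hT : ∀ m : ℕ, sq (m + 1) = T (sq m) := by
    intro m
    simp only [hsq, T, step]
    refine Prod.ext (by rw [hcast m]) ?_
    have h := hstep ((m : ℕ) : ZMod n)
    rw [hcast (m + 1), hcast m]
    rw [show ((m : ℕ) : ZMod n) + 1 + 1 = ((m : ℕ) : ZMod n) + 2 by ring]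
    rw [h, step]
  have hOk : ∀ m : ℕ, OkB (sq m) = true := by
    intro m
    have h := hok ((m : ℕ) : ZMod n)
    simp only [hsq]
    rw [hcast m]
    exact h
  obtain ⟨k, hk⟩ := fact1 (sq 0) (hOk 0)
    (by rw [← hT 0]; exact hOk 1)
    (by rw [← hT 0, ← hT 1]; exact hOk 2)
  have heq : ∀ m : ℕ, sq m =
      (wd n k ((m : ℕ) : ZMod n), wd n k (((m + 1 : ℕ)) : ZMod n)) := by
    intro m
    induction m with
    | zero =>
      rw [hk]
      have w0 : wd n k (((0 : ℕ)) : ZMod n) = pat k := by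
        rw [wd_natCast hd]; norm_num
      have w1 : wd n k (((0 + 1 : ℕ)) : ZMod n) = pat (k + 1) := by
        rw [wd_natCast hd]; push_cast; rw [add_comm]
      rw [w0, w1]
    | succ m ih =>
      rw [hT m, ih]
      simp only [T]
      refine Prod.ext rfl ?_
      rw [wd_natCast hd, wd_natCast hd, wd_natCast hd]
      push_cast
      have h2 := fact2 ((m : ZMod 4) + k)
      rw [show (m : ZMod 4) + 1 + 1 + k = ((m : ZMod 4) + k) + 2 by ring, h2]
      congr 2
      ring
  have hwk : ∀ i : ZMod n, w i = wd n k i := by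
    intro i
    have h := congrArg Prod.fst (heq i.val)
    simp only [hsq] at h
    rwa [ZMod.natCast_rightInverse i] at h
  refine ⟨k, ?_⟩
  ext v
  obtain ⟨i, r⟩ := v
  have hr : ∀ s : Fin 2, s = 0 ∨ s = 1 := by decide
  rcases hr r with rfl | rfl
  · rw [tb0 i, hwk i, SK, mem_genSet0]
  · rw [tb1 i, hwk i, SK, mem_genSet1]

end

section
open PrismAux
variable {n : ℕ}

def Col (n : ℕ) [NeZero n] (k : ZMod 4) : Finset (ZMod n) :=
  Finset.univ.filter (fun i => ((wd n k i).1 || (wd n k i).2) = true)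

lemma mem_Col [NeZero n] (k : ZMod 4) (i : ZMod n) :
    i ∈ Col n k ↔ ((wd n k i).1 || (wd n k i).2) = true := by simp [Col]

lemma col_flip [NeZero n] (hd : 4 ∣ n) (k : ZMod 4) (i : ZMod n) :
    ((wd n k (i + 1)).1 || (wd n k (i + 1)).2) = !((wd n k i).1 || (wd n k i).2) := by
  show ((pat (cm (i+1) + k)).1 || (pat (cm (i+1) + k)).2) = _
  rw [cm_add_one hd, show cm i + 1 + k = (cm i + k) + 1 by ring]
  exact fact5 (cm i + k)

lemma card_Col [NeZero n] (hn : 4 ≤ n) (hd : 4 ∣ n) (k : ZMod 4) :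
    (Col n k).card = n / 2 := by
  have hbij : (Col n k).card = (Finset.univ \ Col n k).card := by
    apply Finset.card_bij (fun i _ => i + 1)
    · intro a ha
      rw [Finset.mem_sdiff]
      refine ⟨Finset.mem_univ _, ?_⟩
      rw [mem_Col] at ha ⊢
      rw [col_flip hd, ha]
      simp
    · intro a _ b _ h
      exact add_right_cancel h
    · intro b hb
      rw [Finset.mem_sdiff, mem_Col] at hb
      refine ⟨b - 1, ?_, by ring⟩
      rw [mem_Col]
      have hthis := col_flip hd k (b - 1)
      rw [sub_add_cancel] at hthis
      cases hx : ((wd n k (b - 1)).1 || (wd n k (b - 1)).2) with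
      | true => rfl
      | false =>
        rw [hx] at hthis
        simp only [Bool.not_false] at hthis
        exact absurd hthis hb.2
  have hle : (Col n k).card ≤ n := by
    have := Finset.card_le_univ (Col n k)
    rwa [ZMod.card] at this
  have hsd : (Finset.univ \ Col n k).card = n - (Col n k).card := by
    rw [Finset.card_sdiff_of_subset (Finset.subset_univ _), Finset.card_univ, ZMod.card]
  omega

lemma card_SK [NeZero n] (hn : 4 ≤ n) (hd : 4 ∣ n) (k : ZMod 4) :
    (SK n k).card = n / 2 := by
  rw [← card_Col hn hd k]
  apply Finset.card_bij (fun (a : V n) _ => a.1)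
  · rintro ⟨i, r⟩ ha
    have hr : ∀ s : Fin 2, s = 0 ∨ s = 1 := by decide
    rw [mem_Col]
    rcases hr r with rfl | rfl
    · rw [SK, mem_genSet0] at ha; rw [ha]; simp
    · rw [SK, mem_genSet1] at ha; rw [ha]; simp
  · rintro ⟨i, r⟩ ha ⟨i', r'⟩ hb h
    simp only at h
    subst h
    have hr : ∀ s : Fin 2, s = 0 ∨ s = 1 := by decide
    have h4 := fact4 (cm i + k)
    rcases hr r with rfl | rfl <;> rcases hr r' with rfl | rfl
    · rfl
    · rw [SK, mem_genSet0] at ha; rw [SK, mem_genSet1] at hb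
      exact absurd ⟨ha, hb⟩ h4
    · rw [SK, mem_genSet1] at ha; rw [SK, mem_genSet0] at hb
      exact absurd ⟨hb, ha⟩ h4
    · rfl
  · intro b hb
    rw [mem_Col] at hb
    cases h1 : (wd n k b).1 with
    | false =>
      have h2 : (wd n k b).2 = true := by
        rw [h1] at hb; simpa using hb
      exact ⟨(b, 1), by rw [SK, mem_genSet1]; exact h2, rfl⟩
    | true => exact ⟨(b, 0), by rw [SK, mem_genSet0]; exact h1, rfl⟩

end

section
open PrismAux
variable {n : ℕ}

lemma dom_SK [NeZero n] (hn : 4 ≤ n) (hd : 4 ∣ n) (k : ZMod 4) :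
    IsDominatingSet n ↑(SK n k) := by
  rw [dom_iff hn]
  rintro ⟨i, r⟩
  have h31 : (3 : ZMod 4) = -1 := by decide
  have e0 : wd n k i = pat (cm i + k) := rfl
  have e1 : wd n k (i + 1) = pat ((cm i + k) + 1) := by
    rw [wd, cm_add_one hd]; congr 1; ring
  have e2 : wd n k (i - 1) = pat ((cm i + k) + 3) := by
    have hc : cm (i - 1) = cm i - 1 := by
      have := cm_add_one hd (i - 1)
      rw [sub_add_cancel] at this
      rw [this]; ring
    rw [wd, hc, h31]; congr 1; ring
  have hnb0 : nbhd ((i, (0 : Fin 2)) : V n) = {(i, 0), (i + 1, 0), (i - 1, 0), (i, 1)} := by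
    simp [nbhd, flipr]
  have hnb1 : nbhd ((i, (1 : Fin 2)) : V n) = {(i, 1), (i + 1, 1), (i - 1, 1), (i, 0)} := by
    simp [nbhd, flipr]
  have hr : ∀ s : Fin 2, s = 0 ∨ s = 1 := by decide
  rcases hr r with rfl | rfl
  · rcases fact6 (cm i + k) with h | h | h | h
    · exact ⟨(i, 0), (mem_genSet0 _ i).2 (by rw [e0]; exact h), by rw [hnb0]; simp⟩
    · exact ⟨(i, 1), (mem_genSet1 _ i).2 (by rw [e0]; exact h), by rw [hnb0]; simp⟩
    · exact ⟨(i + 1, 0), (mem_genSet0 _ (i + 1)).2 (by rw [e1]; exact h), by rw [hnb0]; simp⟩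
    · exact ⟨(i - 1, 0), (mem_genSet0 _ (i - 1)).2 (by rw [e2]; exact h), by rw [hnb0]; simp⟩
  · rcases fact7 (cm i + k) with h | h | h | h
    · exact ⟨(i, 1), (mem_genSet1 _ i).2 (by rw [e0]; exact h), by rw [hnb1]; simp⟩
    · exact ⟨(i, 0), (mem_genSet0 _ i).2 (by rw [e0]; exact h), by rw [hnb1]; simp⟩
    · exact ⟨(i + 1, 1), (mem_genSet1 _ (i + 1)).2 (by rw [e1]; exact h), by rw [hnb1]; simp⟩
    · exact ⟨(i - 1, 1), (mem_genSet1 _ (i - 1)).2 (by rw [e2]; exact h), by rw [hnb1]; simp⟩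

lemma domNum_eq [NeZero n] (hn : 4 ≤ n) (hd : 4 ∣ n) : domNum n = n / 2 := by
  apply le_antisymm
  · exact Nat.sInf_le ⟨SK n 0, card_SK hn hd 0, dom_SK hn hd 0⟩
  · apply le_csInf
    · exact ⟨n / 2, SK n 0, card_SK hn hd 0, dom_SK hn hd 0⟩
    · rintro b ⟨S, rfl, hDom⟩
      have := (counting hn hDom).1
      omega

lemma SK_inj [NeZero n] (hn : 4 ≤ n) (hd : 4 ∣ n) {k l : ZMod 4} (h : SK n k = SK n l) :
    k = l := by
  have q : ∀ i : ZMod n, wd n k i = wd n l i := by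
    intro i
    have h0 : ((wd n k i).1 = true) ↔ ((wd n l i).1 = true) := by
      rw [← mem_genSet0, ← mem_genSet0, ← SK, ← SK, h]
    have h1 : ((wd n k i).2 = true) ↔ ((wd n l i).2 = true) := by
      rw [← mem_genSet1, ← mem_genSet1, ← SK, ← SK, h]
    have b0 : (wd n k i).1 = (wd n l i).1 := by
      cases hx : (wd n k i).1 <;> cases hy : (wd n l i).1 <;> simp_all
    have b1 : (wd n k i).2 = (wd n l i).2 := by
      cases hx : (wd n k i).2 <;> cases hy : (wd n l i).2 <;> simp_all
    exact Prod.ext b0 b1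
  apply fact3
  have w0k : wd n (k) (0 : ZMod n) = pat k := by rw [wd, cm_zero, zero_add]
  have w0l : wd n (l) (0 : ZMod n) = pat l := by rw [wd, cm_zero, zero_add]
  have w1k : wd n (k) (1 : ZMod n) = pat (k + 1) := by rw [wd, cm_one hd, add_comm]
  have w1l : wd n (l) (1 : ZMod n) = pat (l + 1) := by rw [wd, cm_one hd, add_comm]
  have q0 := q 0; have q1 := q 1
  rw [w0k, w0l] at q0
  rw [w1k, w1l] at q1
  exact Prod.ext q0 q1

end

theorem dominion_mod_zero (n : ℕ) (hn : 4 ≤ n) (hmod : n % 4 = 0) :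
    dominion n = 4 := by
  haveI : NeZero n := ⟨by omega⟩
  have hd : 4 ∣ n := Nat.dvd_of_mod_eq_zero hmod
  have hset : {S : Finset (ZMod n × Fin 2) | S.card = domNum n ∧ IsDominatingSet n ↑S}
      = ↑({SK n 0, SK n 1, SK n 2, SK n 3} : Finset (Finset (V n))) := by
    ext S
    simp only [Set.mem_setOf_eq, Finset.coe_insert, Set.mem_insert_iff,
      Finset.coe_singleton, Set.mem_singleton_iff]
    constructor
    · rintro ⟨hc, hdom2⟩
      rw [domNum_eq hn hd] at hc
      obtain ⟨k, rfl⟩ := classify hn hd hc hdom2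
      rcases PrismAux.fact8 k with rfl | rfl | rfl | rfl
      exacts [Or.inl rfl, Or.inr (Or.inl rfl), Or.inr (Or.inr (Or.inl rfl)),
        Or.inr (Or.inr (Or.inr rfl))]
    · rintro (rfl | rfl | rfl | rfl) <;>
        exact ⟨by rw [domNum_eq hn hd, card_SK hn hd], dom_SK hn hd _⟩
  rw [dominion, hset, Set.ncard_coe_finset]
  have d01 : SK n 0 ≠ SK n 1 := fun h => absurd (SK_inj hn hd h) (by decide)
  have d02 : SK n 0 ≠ SK n 2 := fun h => absurd (SK_inj hn hd h) (by decide)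
  have d03 : SK n 0 ≠ SK n 3 := fun h => absurd (SK_inj hn hd h) (by decide)
  have d12 : SK n 1 ≠ SK n 2 := fun h => absurd (SK_inj hn hd h) (by decide)
  have d13 : SK n 1 ≠ SK n 3 := fun h => absurd (SK_inj hn hd h) (by decide)
  have d23 : SK n 2 ≠ SK n 3 := fun h => absurd (SK_inj hn hd h) (by decide)
  rw [Finset.card_insert_of_notMem (by simp [d01, d02, d03]),
      Finset.card_insert_of_notMem (by simp [d12, d13]),
      Finset.card_insert_of_notMem (by simp [d23]),
      Finset.card_singleton]
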